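/- arXiv:1707.04695 — 6 statements merged into one kernel-verified Lean document; each statement's English description precedes it below -/
import Mathlib

section
/- Let (N_k) be a sequence of complex numbers satisfying N_k = 2 N_{k-1} + C_k N_{k-2} for k ≥ 1 with N_{-1} = 1, N_{-2} = 0, where |C_k| < 1 for all k. Then |N_k| - |N_{k-1}| ≥ 1 for all k ≥ 0; in particular N_k ≠ 0 for all k ≥ 0. -/
/-- Denominators of the equivalent continued fraction: if `N k = 2 N (k-1) + C k * N (k-2)`
with `N (-1) = 1`, `N (-2) = 0` and `|C k| < 1`, then `|N k| - |N (k-1)| ≥ 1` for `k ≥ 0`,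
and in particular `N k ≠ 0` for `k ≥ 0`.  (Indices are shifted by 2: `N 0` stands for
`N_{-2}`, `N 1` for `N_{-1}`, and `N (k+2)` for `N_k`.) -/
theorem stmt_1 (C : ℕ → ℂ) (hC : ∀ k, ‖C k‖ < 1) (N : ℕ → ℂ)
    (hN0 : N 0 = 0) (hN1 : N 1 = 1)
    (hNrec : ∀ k, N (k + 2) = 2 * N (k + 1) + C k * N k) :
    (∀ k, 1 ≤ ‖N (k + 2)‖ - ‖N (k + 1)‖) ∧
      (∀ k, N (k + 2) ≠ 0) := by
  have key : ∀ k, 1 ≤ ‖N (k + 2)‖ - ‖N (k + 1)‖ := by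
    intro k
    induction k with
    | zero =>
      have : N 2 = 2 := by rw [hNrec 0, hN0, hN1]; ring
      simp [this, hN1]; norm_num
    | succ n ih =>
      have h1 : 2 * ‖N (n + 2)‖ ≤
          ‖N (n + 3)‖ + ‖C (n + 1)‖ * ‖N (n + 1)‖ := by
        have := hNrec (n + 1)
        have heq : (2 : ℂ) * N (n + 2) = N (n + 3) - C (n + 1) * N (n + 1) := by
          rw [show n + 1 + 2 = n + 3 from rfl] at this; rw [this]; ring
        calc 2 * ‖N (n + 2)‖
            = ‖N (n + 3) - C (n + 1) * N (n + 1)‖ := by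
              rw [← heq, norm_mul]; simp
          _ ≤ ‖N (n + 3)‖ + ‖C (n + 1) * N (n + 1)‖ := by
              simpa [sub_eq_add_neg] using norm_add_le (N (n + 3)) (-(C (n + 1) * N (n + 1)))
          _ = ‖N (n + 3)‖ + ‖C (n + 1)‖ * ‖N (n + 1)‖ := by
              rw [norm_mul]
      have h2 : ‖C (n + 1)‖ * ‖N (n + 1)‖ ≤ ‖N (n + 1)‖ := by
        have := (hC (n + 1)).le
        nlinarith [norm_nonneg (N (n + 1)), norm_nonneg (C (n + 1))]
      have := ih
      linarith
  refine ⟨key, fun k hk => ?_⟩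
  have := key k
  rw [hk] at this
  have hnn := norm_nonneg (N (k + 1))
  simp only [norm_zero] at this
  linarith
end

section
/- Let (N_k) satisfy N_k = 2 N_{k-1} + C_k N_{k-2} with N_{-1} = 1, N_{-2} = 0 and |C_i| < 1 for all i. Then the series ∑_{i=0}^{∞} (∏_{j=0}^{i} C_j)/(N_i N_{i-1}) converges absolutely. -/
/-- Absolute convergence of the Euler series of the continued fraction with
denominators `N k = 2 N (k-1) + C k N (k-2)`, `N (-1) = 1`, `N (-2) = 0`, `|C i| < 1`.
(Indices shifted by 2: `N (i+2)` stands for `N_i`.) -/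
theorem stmt_3 (C : ℕ → ℂ) (hC : ∀ k, ‖C k‖ < 1) (N : ℕ → ℂ)
    (hN0 : N 0 = 0) (hN1 : N 1 = 1)
    (hNrec : ∀ k, N (k + 2) = 2 * N (k + 1) + C k * N k) :
    Summable (fun i : ℕ =>
      ‖(∏ j ∈ Finset.range (i + 1), C j) / (N (i + 2) * N (i + 1))‖) := by
  have key : ∀ k : ℕ, (k : ℝ) ≤ ‖N k‖ ∧
      ‖N k‖ + 1 ≤ ‖N (k + 1)‖ := by
    intro k
    induction k with
    | zero => simp [hN0, hN1]
    | succ k ih =>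
      obtain ⟨h1, h2⟩ := ih
      have hk1 : (k : ℝ) + 1 ≤ ‖N (k + 1)‖ := by linarith
      have habs : 2 * ‖N (k + 1)‖ - ‖C k‖ * ‖N k‖
          ≤ ‖N (k + 2)‖ := by
        have t := norm_add_le (2 * N (k + 1) + C k * N k) (-(C k * N k))
        simp only [add_neg_cancel_right] at t
        rw [hNrec k]
        have h2' : ‖2 * N (k + 1)‖ = 2 * ‖N (k + 1)‖ := by
          rw [norm_mul]; norm_num
        have h3' : ‖-(C k * N k)‖ = ‖C k‖ * ‖N k‖ := by
          rw [norm_neg, norm_mul]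
        linarith
      have hCk : ‖C k‖ * ‖N k‖ ≤ ‖N k‖ := by
        have := (hC k).le
        nlinarith [norm_nonneg (N k), norm_nonneg (C k)]
      constructor
      · push_cast; linarith
      · linarith
  have hpos : ∀ k : ℕ, (k : ℝ) + 1 ≤ ‖N (k + 1)‖ := by
    intro k
    obtain ⟨h1, h2⟩ := key k
    linarith
  have hbound : ∀ i : ℕ,
      ‖(∏ j ∈ Finset.range (i + 1), C j) / (N (i + 2) * N (i + 1))‖
        ≤ 1 / ((i : ℝ) + 1) ^ 2 := by
    intro i
    have hprod : ‖∏ j ∈ Finset.range (i + 1), C j‖ ≤ 1 := by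
      rw [norm_prod]
      calc ∏ j ∈ Finset.range (i + 1), ‖C j‖
          ≤ ∏ j ∈ Finset.range (i + 1), 1 :=
            Finset.prod_le_prod (fun j _ => norm_nonneg _) (fun j _ => (hC j).le)
        _ = 1 := by simp
    have h1 : ((i : ℝ) + 1) ≤ ‖N (i + 1)‖ := hpos i
    have h2 : ((i : ℝ) + 1) ≤ ‖N (i + 2)‖ := by
      have := hpos (i + 1); push_cast at this ⊢; linarith
    have hip : (0 : ℝ) < (i : ℝ) + 1 := by positivity
    rw [norm_div, norm_mul]
    rw [div_le_div_iff₀ (by nlinarith) (by positivity)]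
    nlinarith [norm_nonneg (∏ j ∈ Finset.range (i + 1), C j)]
  have hsum : Summable (fun i : ℕ => 1 / ((i : ℝ) + 1) ^ 2) := by
    have := (summable_nat_add_iff (f := fun n : ℕ => 1 / (n : ℝ) ^ 2) 1).2
      (Real.summable_one_div_nat_pow.2 one_lt_two)
    simpa using this
  exact Summable.of_nonneg_of_le (fun i => norm_nonneg _) hbound hsum
end

section
/- With P_n the first-kind orthogonal polynomials of a Jacobi matrix (conventions: b_{-1} = 0, P_{-1} ≡ 0), for every n ≥ 0 and every real x: P_n(x)² - (b_{n-1}/b_n) P_{n-1}(x) P_{n+1}(x) = (1/b_n²) ∑_{k=0}^{n} [ (b_k² - b_{k-1}²) P_k(x)² + b_{k-1}(a_k - a_{k-1}) P_{k-1}(x) P_k(x) ]. -/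
/-- Turán determinant identity: with conventions `b (-1) = 0`, `P (-1) = 0`,
`P n x ^ 2 - (b (n-1)/b n) * P (n-1) x * P (n+1) x
  = (1/b n ^ 2) * ∑_{k=0}^{n} [(b k ^ 2 - b (k-1) ^ 2) P k ^ 2
      + b (k-1) (a k - a (k-1)) P (k-1) P k]`. -/
theorem stmt_8 (a b : ℤ → ℝ) (P : ℤ → ℝ → ℝ)
    (hbneg : b (-1) = 0) (hPneg : ∀ x, P (-1) x = 0)
    (hb : ∀ n : ℕ, 0 < b n)
    (hP0 : ∀ x, P 0 x = 1) (hP1 : ∀ x, P 1 x = (x - a 0) / b 0)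
    (hPrec : ∀ n : ℕ, ∀ x, b ((n : ℤ) - 1) * P ((n : ℤ) - 1) x + a n * P n x
      + b n * P ((n : ℤ) + 1) x = x * P n x) :
    ∀ n : ℕ, ∀ x : ℝ,
      P n x ^ 2 - (b ((n : ℤ) - 1) / b n) * P ((n : ℤ) - 1) x * P ((n : ℤ) + 1) x
        = (1 / b n ^ 2) * ∑ k ∈ Finset.range (n + 1),
            ((b k ^ 2 - b ((k : ℤ) - 1) ^ 2) * P k x ^ 2
              + b ((k : ℤ) - 1) * (a k - a ((k : ℤ) - 1)) * P ((k : ℤ) - 1) x * P k x) := by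
  intro n x
  have key : ∀ m : ℕ,
      b m ^ 2 * P m x ^ 2 - b ((m : ℤ) - 1) * b m * P ((m : ℤ) - 1) x * P ((m : ℤ) + 1) x
        = ∑ k ∈ Finset.range (m + 1),
            ((b k ^ 2 - b ((k : ℤ) - 1) ^ 2) * P k x ^ 2
              + b ((k : ℤ) - 1) * (a k - a ((k : ℤ) - 1)) * P ((k : ℤ) - 1) x * P k x) := by
    intro m
    induction m with
    | zero =>
      rw [Finset.sum_range_one]
      norm_num [hbneg, hPneg x, hP0 x]
    | succ m ih =>
      rw [Finset.sum_range_succ, ← ih]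
      have h1 := hPrec (m + 1) x
      have h2 := hPrec m x
      push_cast at h1 h2 ⊢
      have e1 : (m : ℤ) + 1 - 1 = (m : ℤ) := by ring
      rw [e1] at h1 ⊢
      linear_combination -(b m * P m x) * h1 + (b m * P ((m : ℤ) + 1) x) * h2
  have hbn := (hb n).ne'
  have hk := key n
  have expand : (1 / b n ^ 2) * (b (n : ℤ) ^ 2 * P n x ^ 2
      - b ((n : ℤ) - 1) * b n * P ((n : ℤ) - 1) x * P ((n : ℤ) + 1) x)
      = P n x ^ 2 - (b ((n : ℤ) - 1) / b n) * P ((n : ℤ) - 1) x * P ((n : ℤ) + 1) x := by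
    field_simp
  rw [← hk, expand]
end

section
/- Let a_n = 0 and suppose b_{2k-1} = b_{2k} for all k ≥ 1, with b_n → ∞ such that ∑_k 1/b_{2k-1}² < ∞. Then ∑_{n=0}^{∞} P_n(0)² < ∞. -/
/-- Zero diagonal, `b (2k-1) = b (2k)` and `∑ 1/b (2k-1)² < ∞` imply
`∑ P n (0)² < ∞` (so `0` is an eigenvalue). -/
theorem stmt_12 (b : ℕ → ℝ) (hb : ∀ n, 0 < b n)
    (heq : ∀ k : ℕ, b (2 * k + 1) = b (2 * k + 2))
    (hinf : Filter.Tendsto b Filter.atTop Filter.atTop)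
    (hsum : Summable (fun k : ℕ => 1 / (b (2 * k + 1)) ^ 2))
    (P : ℕ → ℝ → ℝ)
    (hP0 : ∀ x, P 0 x = 1) (hP1 : ∀ x, P 1 x = x / b 0)
    (hPrec : ∀ n x, b n * P n x + b (n + 1) * P (n + 2) x = x * P (n + 1) x) :
    Summable (fun n : ℕ => (P n 0) ^ 2) := by
  have hbne : ∀ n, b n ≠ 0 := fun n => (hb n).ne'
  have hstep : ∀ n, P (n + 2) 0 = -(b n / b (n + 1)) * P n 0 := by
    intro n
    have h := hPrec n 0
    rw [zero_mul] at h
    field_simp [hbne]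
    linarith
  have hodd : ∀ k, P (2 * k + 1) 0 = 0 := by
    intro k
    induction k with
    | zero => simpa using hP1 0
    | succ k ih =>
      have e : 2 * (k + 1) + 1 = 2 * k + 1 + 2 := by ring
      rw [e, hstep, ih, mul_zero]
  have heven : ∀ k, (P (2 * k + 2) 0) ^ 2 = (b 0) ^ 2 / (b (2 * k + 1)) ^ 2 := by
    intro k
    induction k with
    | zero =>
      have h := hstep 0
      rw [hP0 0, mul_one] at h
      rw [h]
      rw [show 2 * 0 + 1 = 1 from rfl]
      rw [neg_pow, div_pow]
      norm_num
    | succ k ih =>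
      have h := hstep (2 * k + 2)
      have h2 : P (2 * (k + 1) + 2) 0 = -(b (2 * k + 2) / b (2 * k + 3)) * P (2 * k + 2) 0 := by
        convert h using 3 <;> ring
      rw [h2, mul_pow, neg_pow, div_pow, ih, ← heq k]
      have h3 : b (2 * (k + 1) + 1) = b (2 * k + 3) := by ring_nf
      rw [h3]
      field_simp [hbne]
  apply Summable.even_add_odd
  · -- even part
    rw [← summable_nat_add_iff 1]
    have : (fun k : ℕ => (P (2 * (k + 1)) 0) ^ 2)
        = fun k : ℕ => (b 0) ^ 2 * (1 / (b (2 * k + 1)) ^ 2) := by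
      funext k
      have : 2 * (k + 1) = 2 * k + 2 := by ring
      rw [this, heven k]
      ring
    rw [this]
    exact hsum.mul_left _
  · -- odd part
    simpa [hodd] using summable_zero
end

section
/- Let P_n be the normalized Hermite polynomials (orthonormal polynomials for a_n = 0, b_n = √((n+1)/2)). Then for every n ≥ 1 the function g_n(x) = ∑_{k=0}^{n} P_k(x)² satisfies g_n'(x) = 4x · (sum of P_j(x)² over j of the opposite parity of n, j < n); consequently g_n is strictly increasing on (0, ∞), strictly decreasing on (-∞, 0), and attains its minimum at x = 0. -/
private lemma sqrt_two_mul' (a : ℝ) (ha : 0 ≤ a) :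
    Real.sqrt (2 * a) = 2 * Real.sqrt (a / 2) := by
  rw [show 2 * a = 4 * (a / 2) by ring,
    Real.sqrt_mul (by norm_num : (0:ℝ) ≤ 4),
    show (4:ℝ) = 2 ^ 2 by norm_num, Real.sqrt_sq (by norm_num : (0:ℝ) ≤ 2)]

/-- For the normalized Hermite polynomials, `g n = ∑_{k=0}^{n} P k ²` satisfies
`g n ' (x) = 4 x ∑_{j<n, j ≢ n (mod 2)} P j (x) ²`; consequently `g n` is strictly
increasing on `(0,∞)`, strictly decreasing on `(-∞,0)` and attains its minimum at `0`. -/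
theorem stmt_14 (P : ℕ → ℝ → ℝ)
    (hP0 : ∀ x, P 0 x = 1) (hP1 : ∀ x, P 1 x = Real.sqrt 2 * x)
    (hPrec : ∀ k : ℕ, ∀ x, Real.sqrt ((k + 2) / 2) * P (k + 2) x
      = x * P (k + 1) x - Real.sqrt ((k + 1) / 2) * P k x)
    (hPderiv : ∀ k : ℕ, ∀ x, HasDerivAt (P (k + 1)) (Real.sqrt (2 * (k + 1)) * P k x) x) :
    ∀ n : ℕ, 1 ≤ n →
      (∀ x : ℝ, HasDerivAt (fun y => ∑ k ∈ Finset.range (n + 1), P k y ^ 2)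
        (4 * x * ∑ j ∈ Finset.range n, if j % 2 ≠ n % 2 then P j x ^ 2 else 0) x) ∧
      StrictMonoOn (fun x => ∑ k ∈ Finset.range (n + 1), P k x ^ 2) (Set.Ioi (0 : ℝ)) ∧
      StrictAntiOn (fun x => ∑ k ∈ Finset.range (n + 1), P k x ^ 2) (Set.Iio (0 : ℝ)) ∧
      (∀ x : ℝ, ∑ k ∈ Finset.range (n + 1), P k 0 ^ 2
        ≤ ∑ k ∈ Finset.range (n + 1), P k x ^ 2) := by
  have sqrt2 : Real.sqrt 2 * Real.sqrt 2 = 2 := Real.mul_self_sqrt (by norm_num)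
  have main : ∀ m : ℕ, ∀ x : ℝ,
      HasDerivAt (fun y => ∑ k ∈ Finset.range (m + 1), P k y ^ 2)
        (4 * x * ∑ j ∈ Finset.range m, if j % 2 ≠ m % 2 then P j x ^ 2 else 0) x := by
    intro m
    induction m using Nat.twoStepInduction with
    | zero =>
      intro x
      have hfun : (fun y => ∑ k ∈ Finset.range 1, P k y ^ 2) = fun _ => (1:ℝ) := by
        funext y; simp [hP0]
      rw [hfun]
      simpa using hasDerivAt_const x (1:ℝ)
    | one =>
      intro x
      have hfun : (fun y => ∑ k ∈ Finset.range 2, P k y ^ 2)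
          = fun y => 1 + P 1 y ^ 2 := by
        funext y; simp [Finset.sum_range_succ, hP0]
      rw [hfun]
      have h1 := (hPderiv 0 x).pow 2
      have := (hasDerivAt_const x (1:ℝ)).add h1
      convert this using 1
      · rfl
      · rfl
      · rfl
      simp only [Finset.sum_range_one]
      norm_num
      rw [hP1, hP0]
      linear_combination (-(2*x)) * sqrt2
    | more m ih _ =>
      intro x
      have h1 := ih x
      have h2 := (hPderiv m x).pow 2
      have h3 := (hPderiv (m+1) x).pow 2
      have hfun : (fun y => ∑ k ∈ Finset.range (m + 2 + 1), P k y ^ 2)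
          = fun y => ((∑ k ∈ Finset.range (m + 1), P k y ^ 2) + P (m+1) y ^ 2)
            + P (m+2) y ^ 2 := by
        funext y
        rw [Finset.sum_range_succ, Finset.sum_range_succ]
      rw [hfun]
      have := (h1.add h2).add h3
      convert this using 1
      · rfl
      · rfl
      · rfl
      have hrec := hPrec m x
      have e1 : Real.sqrt (2 * ((m:ℝ) + 1)) = 2 * Real.sqrt (((m:ℝ)+1)/2) :=
        sqrt_two_mul' _ (by positivity)
      have e2 : Real.sqrt (2 * ((m:ℝ) + 1 + 1)) = 2 * Real.sqrt (((m:ℝ)+2)/2) := by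
        rw [show ((m:ℝ)+1+1) = ((m:ℝ)+2) by ring]
        exact sqrt_two_mul' _ (by positivity)
      rw [Finset.sum_range_succ, Finset.sum_range_succ]
      have hm2 : (m + 2) % 2 = m % 2 := by omega
      simp only [hm2, if_neg (show ¬ (m % 2 ≠ m % 2) by simp),
        if_pos (show (m+1) % 2 ≠ m % 2 by omega)]
      push_cast
      rw [e1, e2]
      linear_combination (-4 : ℝ) * P (m+1) x * hrec
  intro n hn
  set g : ℝ → ℝ := fun x => ∑ k ∈ Finset.range (n + 1), P k x ^ 2 with hg
  have hdiff : ∀ x : ℝ, DifferentiableAt ℝ g x := fun x => (main n x).differentiableAt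
  have hderiv : ∀ x : ℝ, deriv g x
      = 4 * x * ∑ j ∈ Finset.range n, if j % 2 ≠ n % 2 then P j x ^ 2 else 0 :=
    fun x => (main n x).deriv
  have hTpos : ∀ x : ℝ, x ≠ 0 →
      0 < ∑ j ∈ Finset.range n, if j % 2 ≠ n % 2 then P j x ^ 2 else 0 := by
    intro x hx
    apply Finset.sum_pos'
    · intro i _
      split
      · positivity
      · exact le_rfl
    · rcases Nat.mod_two_eq_zero_or_one n with he | ho
      · have hn2 : 2 ≤ n := by omega
        refine ⟨1, Finset.mem_range.mpr (by omega), ?_⟩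
        rw [if_pos (by omega), hP1]
        have : Real.sqrt 2 * x ≠ 0 := mul_ne_zero (by positivity) hx
        positivity
      · refine ⟨0, Finset.mem_range.mpr (by omega), ?_⟩
        rw [if_pos (by omega), hP0]
        norm_num
  have hmono : StrictMonoOn g (Set.Ici (0:ℝ)) := by
    apply strictMonoOn_of_deriv_pos (convex_Ici 0)
      (fun x _ => (hdiff x).continuousAt.continuousWithinAt)
    intro x hx
    rw [interior_Ici] at hx
    rw [hderiv]
    exact mul_pos (by linarith [Set.mem_Ioi.mp hx]) (hTpos x (ne_of_gt hx))
  have hanti : StrictAntiOn g (Set.Iic (0:ℝ)) := by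
    apply strictAntiOn_of_deriv_neg (convex_Iic 0)
      (fun x _ => (hdiff x).continuousAt.continuousWithinAt)
    intro x hx
    rw [interior_Iic] at hx
    rw [hderiv]
    exact mul_neg_of_neg_of_pos (by linarith [Set.mem_Iio.mp hx]) (hTpos x (ne_of_lt hx))
  refine ⟨main n, hmono.mono (Set.Ioi_subset_Ici le_rfl),
    hanti.mono (Set.Iio_subset_Iic le_rfl), ?_⟩
  intro x
  rcases le_or_gt 0 x with h | h
  · exact hmono.monotoneOn Set.self_mem_Ici h h
  · exact le_of_lt (hanti (le_of_lt h) Set.self_mem_Iic h)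
end

section
/- Under the conditions b_n ≥ b_{n-1} (so b_{n-1}/b_n ≤ 1) and the lower bound ∑_{k=0}^{n} [ (b_k² - b_{k-1}²) P_k(x)² + b_{k-1}(a_k - a_{k-1}) P_{k-1}(x) P_k(x) ] > C b_n for all x ∈ [a,b] and all n ≥ N, the functions f_n(x) = f_{J_n}(x) / (P_n(x)² - (b_{n-1}/b_n) P_{n-1}(x) P_{n+1}(x)) satisfy f_n(x) < 1/(π C) for all x ∈ [a,b] and n ≥ N, where f_{J_n}(x) = √(4b_n² - (a_n - x)²)/(2π b_n²) ≤ 1/(π b_n). -/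
open Real

/-- If `b` is nondecreasing and the Turán-type sum is bounded below by `C * b n` on `[α,β]`
for `n ≥ N`, then the approximating spectral weights
`f n x = f_{J_n}(x) / (P n ² - (b (n-1)/b n) P (n-1) P (n+1))` satisfy `f n x < 1/(π C)`
on `[α,β]` for `n ≥ N`, where `f_{J_n}(x) = √(4 b n ² - (a n - x)²)/(2π b n ²) ≤ 1/(π b n)`. -/
theorem stmt_18 (α β : ℝ) (hαβ : α < β) (a b : ℤ → ℝ) (P : ℤ → ℝ → ℝ)
    (hbneg : b (-1) = 0) (hPneg : ∀ x, P (-1) x = 0)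
    (hb : ∀ n : ℕ, 0 < b n) (hbmono : ∀ n : ℕ, b n ≤ b ((n : ℤ) + 1))
    (hP0 : ∀ x, P 0 x = 1) (hP1 : ∀ x, P 1 x = (x - a 0) / b 0)
    (hPrec : ∀ n : ℕ, ∀ x, b ((n : ℤ) - 1) * P ((n : ℤ) - 1) x + a n * P n x
      + b n * P ((n : ℤ) + 1) x = x * P n x)
    (C : ℝ) (hC : 0 < C) (N : ℕ)
    (hlow : ∀ x ∈ Set.Icc α β, ∀ n : ℕ, N ≤ n →
      C * b n < ∑ k ∈ Finset.range (n + 1),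
        ((b k ^ 2 - b ((k : ℤ) - 1) ^ 2) * P k x ^ 2
          + b ((k : ℤ) - 1) * (a k - a ((k : ℤ) - 1)) * P ((k : ℤ) - 1) x * P k x))
    (fJ : ℕ → ℝ → ℝ)
    (hfJ : ∀ n : ℕ, ∀ x, fJ n x = Real.sqrt (4 * b n ^ 2 - (a n - x) ^ 2) / (2 * π * b n ^ 2))
    (f : ℕ → ℝ → ℝ)
    (hf : ∀ n : ℕ, ∀ x, f n x = fJ n x /
      (P n x ^ 2 - (b ((n : ℤ) - 1) / b n) * P ((n : ℤ) - 1) x * P ((n : ℤ) + 1) x)) :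
    (∀ n : ℕ, ∀ x : ℝ, fJ n x ≤ 1 / (π * b n)) ∧
      ∀ x ∈ Set.Icc α β, ∀ n : ℕ, N ≤ n → f n x < 1 / (π * C) := by
  have hπ : (0:ℝ) < π := Real.pi_pos
  have part1 : ∀ n : ℕ, ∀ x : ℝ, fJ n x ≤ 1 / (π * b n) := by
    intro n x
    have hbn := hb n
    rw [hfJ]
    have h1 : Real.sqrt (4 * b n ^ 2 - (a n - x) ^ 2) ≤ 2 * b n := by
      have h2 : Real.sqrt (4 * b n ^ 2 - (a n - x) ^ 2) ≤ Real.sqrt (4 * b n ^ 2) := by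
        apply Real.sqrt_le_sqrt
        nlinarith [sq_nonneg (a n - x)]
      have h3 : Real.sqrt (4 * b n ^ 2) = 2 * b n := by
        rw [show 4 * b n ^ 2 = (2 * b n) ^ 2 by ring, Real.sqrt_sq (by positivity)]
      linarith
    rw [div_le_div_iff₀ (by positivity) (by positivity)]
    nlinarith [mul_le_mul_of_nonneg_right h1 (le_of_lt (mul_pos hπ hbn))]
  refine ⟨part1, ?_⟩
  have key : ∀ n : ℕ, ∀ x : ℝ,
      (∑ k ∈ Finset.range (n + 1),
        ((b k ^ 2 - b ((k : ℤ) - 1) ^ 2) * P k x ^ 2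
          + b ((k : ℤ) - 1) * (a k - a ((k : ℤ) - 1)) * P ((k : ℤ) - 1) x * P k x))
      = b n ^ 2 * P n x ^ 2
        - b ((n : ℤ) - 1) * b n * P ((n : ℤ) - 1) x * P ((n : ℤ) + 1) x := by
    intro n x
    induction n with
    | zero =>
      norm_num [Finset.sum_range_one, hbneg, hPneg, hP0]
    | succ n ih =>
      rw [Finset.sum_range_succ, ih]
      have e1 := hPrec (n + 1) x
      have e2 := hPrec n x
      push_cast at e1 e2 ⊢
      try simp only [add_sub_cancel_right] at e1
      try simp only [add_sub_cancel_right]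
      linear_combination (b (n : ℤ) * P (n : ℤ) x) * e1 - (b (n : ℤ) * P ((n : ℤ) + 1) x) * e2
  intro x hx n hn
  have hbn := hb n
  have hbn' : b (n : ℤ) ≠ 0 := ne_of_gt hbn
  have hS := hlow x hx n hn
  rw [key n x] at hS
  set D : ℝ := P (n : ℤ) x ^ 2
    - (b ((n : ℤ) - 1) / b (n : ℤ)) * P ((n : ℤ) - 1) x * P ((n : ℤ) + 1) x with hDdef
  have expand : b (n : ℤ) ^ 2 * D
      = b (n : ℤ) ^ 2 * P (n : ℤ) x ^ 2
        - b ((n : ℤ) - 1) * b (n : ℤ) * P ((n : ℤ) - 1) x * P ((n : ℤ) + 1) x := by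
    rw [hDdef]; field_simp
  have hD : C / b (n : ℤ) < D := by
    rw [div_lt_iff₀ hbn]
    nlinarith
  have hDpos : 0 < D := lt_trans (by positivity) hD
  have hfJ0 : 0 ≤ fJ n x := by rw [hfJ]; positivity
  rw [hf]
  rcases eq_or_lt_of_le hfJ0 with h0 | hpos
  · rw [← h0]
    simp only [zero_div]
    positivity
  · calc fJ n x / D < fJ n x / (C / b (n : ℤ)) := by
          exact div_lt_div_of_pos_left hpos (by positivity) hD
      _ = fJ n x * b (n : ℤ) / C := by
          rw [div_div_eq_mul_div]
      _ ≤ (1 / (π * b (n : ℤ))) * b (n : ℤ) / C := by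
          gcongr
          exact part1 n x
      _ = 1 / (π * C) := by
          field_simp
end
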